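/- Let a_j, b_k, c_n be Laurent polynomials (finitely many nonzero) defining X, Y, Z as power series in v, with c_0' + a_0·b_0' = 0 (the core curve is Legendrian) and c_n = −(1/n)Σ_{j+k=n} k a_j b_k. Let N_1 bound the pole order at 0 of all coefficients c_n' + Σ_{j+k=n} a_j b_k'. Then for every N ≥ N_1, the function (Z_u + X·Y_u)(u, u^N) is a holomorphic polynomial in u divisible by u^{N−N_1}, and consequently sup_{|ζ|≤1} |∫_0^ζ (Z_u + X·Y_u)(u, u^N) du| → 0 as N → ∞. -/

import Mathlib

/-- Let `aⱼ, bₖ, cₘ` be Laurent polynomials (finitely many nonzero, indices `< m`), with the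
core curve Legendrian (`c₀' + a₀·b₀' = 0`) and `cₘ = -(1/m)∑_{j+k=m} k aⱼ bₖ`.  Let `N₁`
bound the pole order at `0` of all coefficients `cₘ' + ∑_{j+k=m} aⱼ bₖ'`.  Then for every
`N ≥ N₁` the function `(Z_u + X·Y_u)(u, u^N) = ∑ₘ (cₘ' + ∑_{j+k=m} aⱼ bₖ')(u)·u^{mN}` is a
holomorphic polynomial divisible by `u^{N-N₁}`, and consequently
`sup_{|ζ|≤1} |∫₀^ζ (Z_u + X·Y_u)(u, u^N) du| → 0` as `N → ∞`. -/
theorem laurent_legendrian_integral_estimate (m N₁ : ℕ)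
    (a b c a' b' c' : ℕ → ℂ → ℂ)
    (hfin : ∀ k, m ≤ k → ∀ u : ℂ, a k u = 0 ∧ b k u = 0 ∧ c k u = 0)
    (hder : ∀ k, ∀ u : ℂ, u ≠ 0 →
      HasDerivAt (a k) (a' k u) u ∧ HasDerivAt (b k) (b' k u) u ∧
        HasDerivAt (c k) (c' k u) u)
    (hLaurent : ∀ k, ∃ p : Polynomial ℂ, ∀ u : ℂ, u ≠ 0 →
      c' k u + ∑ q ∈ Finset.HasAntidiagonal.antidiagonal k, a q.1 u * b' q.2 u = Polynomial.eval u p / u ^ N₁)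
    (hcore : ∀ u : ℂ, u ≠ 0 → c' 0 u + a 0 u * b' 0 u = 0)
    (hcn : ∀ k : ℕ, 1 ≤ k → ∀ u : ℂ, u ≠ 0 →
      (k : ℂ) * c k u + ∑ q ∈ Finset.HasAntidiagonal.antidiagonal k, (q.2 : ℂ) * a q.1 u * b q.2 u = 0)
    (g : ℕ → ℂ → ℂ)
    (hg : ∀ N : ℕ, ∀ u : ℂ, g N u = ∑ k ∈ Finset.range m,
      (c' k u + ∑ q ∈ Finset.HasAntidiagonal.antidiagonal k, a q.1 u * b' q.2 u) * u ^ (k * N)) :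
    (∀ N, N₁ ≤ N → ∃ p : Polynomial ℂ, ∀ u : ℂ, u ≠ 0 →
        g N u = u ^ (N - N₁) * Polynomial.eval u p) ∧
      ∀ ε : ℝ, 0 < ε → ∃ N₀ : ℕ, ∀ N, N₀ ≤ N →
        ∀ h : ℂ → ℂ, ContinuousOn h (Metric.closedBall 0 1) → h 0 = 0 →
          (∀ u : ℂ, u ≠ 0 → ‖u‖ < 1 → HasDerivAt h (g N u) u) →
          ∀ ζ ∈ Metric.closedBall (0 : ℂ) 1, ‖h ζ‖ < ε := by
  classical
  choose p hp using hLaurent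
  -- key representation
  have key : ∀ N, N₁ ≤ N → ∀ u : ℂ, u ≠ 0 →
      g N u = u ^ (N - N₁) *
        Polynomial.eval u (∑ k ∈ Finset.Ico 1 m, p k * Polynomial.X ^ (k * N - N)) := by
    intro N hN u hu
    have hsum : g N u = ∑ k ∈ Finset.Ico 1 m,
        Polynomial.eval u (p k) * u ^ (k * N - N₁) := by
      rw [hg]
      rcases Nat.eq_zero_or_pos m with hm | hm
      · simp [hm]
      rw [Finset.range_eq_Ico, Finset.sum_eq_sum_Ico_succ_bot hm]
      have h0 : (c' 0 u + ∑ q ∈ Finset.HasAntidiagonal.antidiagonal 0, a q.1 u * b' q.2 u) = 0 := by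
        rw [Finset.Nat.antidiagonal_zero, Finset.sum_singleton]
        exact hcore u hu
      rw [h0, zero_mul, zero_add]
      refine Finset.sum_congr rfl (fun k hk => ?_)
      rw [Finset.mem_Ico] at hk
      have hkN : N ≤ k * N := Nat.le_mul_of_pos_left N hk.1
      have h1 : N₁ ≤ k * N := le_trans hN hkN
      have hpow : u ^ (k * N) = u ^ N₁ * u ^ (k * N - N₁) := by
        rw [← pow_add, Nat.add_sub_cancel' h1]
      rw [hp k u hu, hpow]
      field_simp
    rw [hsum, Polynomial.eval_finset_sum, Finset.mul_sum]
    refine Finset.sum_congr rfl (fun k hk => ?_)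
    rw [Finset.mem_Ico] at hk
    have hkN : N ≤ k * N := Nat.le_mul_of_pos_left N hk.1
    have hpow : u ^ (k * N - N₁) = u ^ (N - N₁) * u ^ (k * N - N) := by
      rw [← pow_add]
      congr 1
      omega
    rw [Polynomial.eval_mul, Polynomial.eval_pow, Polynomial.eval_X, hpow]
    ring
  constructor
  · exact fun N hN => ⟨_, fun u hu => key N hN u hu⟩
  -- uniform bound
  have hCk : ∀ k : ℕ, ∃ Ck : ℝ, 0 ≤ Ck ∧ ∀ u : ℂ, ‖u‖ ≤ 1 → ‖Polynomial.eval u (p k)‖ ≤ Ck := by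
    intro k
    obtain ⟨Ck, hCk⟩ := (isCompact_closedBall (0 : ℂ) 1).exists_bound_of_continuousOn
      ((p k).continuous_aeval.continuousOn)
    refine ⟨max Ck 0, le_max_right _ _, fun u hu => ?_⟩
    have := hCk u (by simpa [Metric.mem_closedBall, dist_zero_right] using hu)
    exact this.trans (le_max_left _ _)
  choose Ck hCk0 hCkb using hCk
  set C : ℝ := ∑ k ∈ Finset.Ico 1 m, Ck k with hC
  have hC0 : 0 ≤ C := Finset.sum_nonneg fun k _ => hCk0 k
  have hbound : ∀ N, N₁ ≤ N → ∀ u : ℂ, u ≠ 0 → ‖u‖ ≤ 1 →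
      ‖g N u‖ ≤ C * ‖u‖ ^ (N - N₁) := by
    intro N hN u hu hu1
    rw [key N hN u hu, norm_mul, norm_pow, mul_comm]
    gcongr
    rw [Polynomial.eval_finset_sum]
    refine (norm_sum_le _ _).trans (Finset.sum_le_sum fun k hk => ?_)
    rw [Polynomial.eval_mul, Polynomial.eval_pow, Polynomial.eval_X, norm_mul, norm_pow]
    calc ‖Polynomial.eval u (p k)‖ * ‖u‖ ^ (k * N - N)
        ≤ Ck k * 1 := by
          apply mul_le_mul (hCkb k u hu1) (pow_le_one₀ (norm_nonneg _) hu1)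
            (pow_nonneg (norm_nonneg _) _) (hCk0 k)
      _ = Ck k := mul_one _
  -- second part
  intro ε hε
  set δ : ℝ := ε / (3 * (C + 1)) with hδdef
  have hδ : 0 < δ := by positivity
  set ρ : ℝ := max (1 - δ) (1 / 2) with hρdef
  have hρ0 : 0 < ρ := lt_of_lt_of_le (by norm_num) (le_max_right _ _)
  have hρ1 : ρ < 1 := by
    apply max_lt (by linarith) (by norm_num)
  have hCδ : C * δ ≤ ε / 3 := by
    have hC1 : (0:ℝ) < C + 1 := by linarith
    have h1 : C * δ ≤ (C + 1) * δ := by nlinarith [hδ.le]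
    have h2 : (C + 1) * δ = ε / 3 := by
      rw [hδdef]
      field_simp
    linarith
  obtain ⟨N₀', hN₀'⟩ := (Filter.eventually_atTop).1
    ((tendsto_pow_atTop_nhds_zero_of_lt_one hρ0.le hρ1).eventually
      (gt_mem_nhds hδ))
  refine ⟨N₀' + N₁, fun N hN h hcont h0 hderiv ζ hζ => ?_⟩
  have hN1 : N₁ ≤ N := le_trans (Nat.le_add_left _ _) hN
  have hM : N₀' ≤ N - N₁ := by omega
  rcases eq_or_ne ζ 0 with rfl | hζ0
  · simpa [h0] using hε
  have hζ1 : ‖ζ‖ ≤ 1 := by simpa [Metric.mem_closedBall, dist_zero_right] using hζ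
  -- MVT on segments t ↦ h (t ζ)
  have mvt : ∀ s r K : ℝ, 0 < s → s ≤ r → r < 1 → 0 ≤ K →
      (∀ t : ℝ, s ≤ t → t ≤ r → ‖g N ((t : ℂ) * ζ)‖ ≤ K) →
      ‖h ((r : ℂ) * ζ) - h ((s : ℂ) * ζ)‖ ≤ K * (r - s) := by
    intro s r K hs hsr hr1 hK hbd
    have := Convex.norm_image_sub_le_of_norm_hasDerivWithin_le
      (f := fun t : ℝ => h ((t : ℂ) * ζ))
      (f' := fun t : ℝ => ζ • g N ((t : ℂ) * ζ))
      (s := Set.Icc s r) (C := K)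
      (fun t ht => ?_) (fun t ht => ?_) (convex_Icc s r)
      (Set.left_mem_Icc.2 hsr) (Set.right_mem_Icc.2 hsr)
    · calc ‖h ((r:ℂ)*ζ) - h ((s:ℂ)*ζ)‖ ≤ K * ‖r - s‖ := this
        _ = K * (r - s) := by rw [Real.norm_eq_abs, abs_of_nonneg (by linarith)]
    · -- derivative
      obtain ⟨ht1, ht2⟩ := ht
      have htpos : 0 < t := lt_of_lt_of_le hs ht1
      have hne : (t : ℂ) * ζ ≠ 0 := by
        simp [hζ0, Complex.ofReal_eq_zero, ne_of_gt htpos]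
      have hnorm : ‖(t : ℂ) * ζ‖ < 1 := by
        rw [norm_mul, Complex.norm_real, Real.norm_eq_abs, abs_of_pos htpos]
        calc t * ‖ζ‖ ≤ t * 1 := mul_le_mul_of_nonneg_left hζ1 htpos.le
          _ < 1 := by linarith
      have hinner : HasDerivAt (fun t : ℝ => (t : ℂ) * ζ) ζ t := by
        simpa using (Complex.ofRealCLM.hasDerivAt (x := t)).mul_const ζ
      exact ((hderiv _ hne hnorm).scomp t (hinner)).hasDerivWithinAt
    · -- bound
      obtain ⟨ht1, ht2⟩ := ht
      rw [norm_smul]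
      calc ‖ζ‖ * ‖g N ((t:ℂ)*ζ)‖ ≤ 1 * K := by
            exact mul_le_mul hζ1 (hbd t ht1 ht2) (norm_nonneg _) (by norm_num)
        _ = K := one_mul _
  -- estimate on [s, r] through ρ
  have est : ∀ s r : ℝ, 0 < s → s ≤ ρ → ρ ≤ r → r < 1 →
      ‖h ((r : ℂ) * ζ) - h ((s : ℂ) * ζ)‖ ≤ C * ρ ^ (N - N₁) + C * (1 - ρ) := by
    intro s r hs hsρ hρr hr1
    have hb1 : ‖h ((ρ:ℂ)*ζ) - h ((s:ℂ)*ζ)‖ ≤ (C * ρ ^ (N - N₁)) * (ρ - s) := by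
      apply mvt s ρ _ hs hsρ hρ1 (by positivity)
      intro t ht1 ht2
      have htpos : 0 < t := lt_of_lt_of_le hs ht1
      have hnt : ‖(t:ℂ)*ζ‖ ≤ ρ := by
        rw [norm_mul, Complex.norm_real, Real.norm_eq_abs, abs_of_pos htpos]
        calc t * ‖ζ‖ ≤ t * 1 := mul_le_mul_of_nonneg_left hζ1 htpos.le
          _ ≤ ρ := by linarith
      have hne : (t:ℂ)*ζ ≠ 0 := by
        simp [hζ0, Complex.ofReal_eq_zero, ne_of_gt htpos]
      calc ‖g N ((t:ℂ)*ζ)‖ ≤ C * ‖(t:ℂ)*ζ‖ ^ (N - N₁) :=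
            hbound N hN1 _ hne (hnt.trans hρ1.le)
        _ ≤ C * ρ ^ (N - N₁) := by gcongr <;> first | exact norm_nonneg _ | exact hnt
    have hb2 : ‖h ((r:ℂ)*ζ) - h ((ρ:ℂ)*ζ)‖ ≤ C * (r - ρ) := by
      apply mvt ρ r C hρ0 hρr hr1 hC0
      intro t ht1 ht2
      have htpos : 0 < t := lt_of_lt_of_le hρ0 ht1
      have hnt : ‖(t:ℂ)*ζ‖ ≤ 1 := by
        rw [norm_mul, Complex.norm_real, Real.norm_eq_abs, abs_of_pos htpos]
        calc t * ‖ζ‖ ≤ t * 1 := mul_le_mul_of_nonneg_left hζ1 htpos.le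
          _ ≤ 1 := by linarith
      have hne : (t:ℂ)*ζ ≠ 0 := by
        simp [hζ0, Complex.ofReal_eq_zero, ne_of_gt htpos]
      calc ‖g N ((t:ℂ)*ζ)‖ ≤ C * ‖(t:ℂ)*ζ‖ ^ (N - N₁) := hbound N hN1 _ hne hnt
        _ ≤ C * 1 := by
            gcongr
            exact pow_le_one₀ (norm_nonneg _) hnt
        _ = C := mul_one _
    calc ‖h ((r:ℂ)*ζ) - h ((s:ℂ)*ζ)‖
        ≤ ‖h ((r:ℂ)*ζ) - h ((ρ:ℂ)*ζ)‖ + ‖h ((ρ:ℂ)*ζ) - h ((s:ℂ)*ζ)‖ := norm_sub_le_norm_sub_add_norm_sub _ _ _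
      _ ≤ C * (r - ρ) + (C * ρ ^ (N - N₁)) * (ρ - s) := add_le_add hb2 hb1
      _ ≤ C * ρ ^ (N - N₁) + C * (1 - ρ) := by
          have h1 : C * (r - ρ) ≤ C * (1 - ρ) := mul_le_mul_of_nonneg_left (by linarith) hC0
          have h2 : (C * ρ ^ (N - N₁)) * (ρ - s) ≤ C * ρ ^ (N - N₁) * 1 := by
            apply mul_le_mul_of_nonneg_left (by linarith) (by positivity)
          nlinarith [h1, h2]
  -- limits
  have hsn : Filter.Tendsto (fun n : ℕ => ρ * (1 / (n + 1 : ℝ))) Filter.atTop (nhds 0) := by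
    simpa using tendsto_one_div_add_atTop_nhds_zero_nat.const_mul ρ
  have hrn : Filter.Tendsto (fun n : ℕ => 1 - (1 - ρ) * (1 / (n + 1 : ℝ))) Filter.atTop (nhds 1) := by
    have := (tendsto_one_div_add_atTop_nhds_zero_nat.const_mul (1 - ρ)).const_sub 1
    simpa using this
  set sn : ℕ → ℝ := fun n => ρ * (1 / (n + 1 : ℝ)) with hsndef
  set rn : ℕ → ℝ := fun n => 1 - (1 - ρ) * (1 / (n + 1 : ℝ)) with hrndef
  have hsnpos : ∀ n, 0 < sn n := fun n => by positivity
  have hsnρ : ∀ n, sn n ≤ ρ := by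
    intro n
    rw [hsndef]
    calc ρ * (1 / (n + 1 : ℝ)) ≤ ρ * 1 := by
          gcongr
          rw [div_le_one (by positivity)]; linarith [Nat.cast_nonneg (α := ℝ) n]
      _ = ρ := mul_one _
  have hrnρ : ∀ n, ρ ≤ rn n := by
    intro n
    rw [hrndef]
    have : (1 - ρ) * (1 / (n + 1 : ℝ)) ≤ (1 - ρ) * 1 := by
      gcongr
      · rw [div_le_one (by positivity)]; linarith [Nat.cast_nonneg (α := ℝ) n]
    simp only
    linarith
  have hrn1 : ∀ n, rn n < 1 := by
    intro n
    have h1ρpos : 0 < 1 - ρ := by linarith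
    have : 0 < (1 - ρ) * (1 / (n + 1 : ℝ)) := by positivity
    simp only [hrndef]
    linarith
  -- h (sn n * ζ) → h 0 = 0  and  h (rn n * ζ) → h ζ
  have hc0 : Filter.Tendsto (fun n : ℕ => h ((sn n : ℂ) * ζ)) Filter.atTop (nhds 0) := by
    have hmem : ∀ n, ((sn n : ℂ) * ζ) ∈ Metric.closedBall (0:ℂ) 1 := by
      intro n
      rw [Metric.mem_closedBall, dist_zero_right, norm_mul, Complex.norm_real,
        Real.norm_eq_abs, abs_of_pos (hsnpos n)]
      calc sn n * ‖ζ‖ ≤ 1 * 1 := by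
            apply mul_le_mul _ hζ1 (norm_nonneg _) (by norm_num)
            linarith [hsnρ n, hρ1]
        _ = 1 := one_mul _
    have htend : Filter.Tendsto (fun n : ℕ => (sn n : ℂ) * ζ) Filter.atTop (nhds 0) := by
      have : Filter.Tendsto (fun n : ℕ => ((sn n : ℝ) : ℂ)) Filter.atTop (nhds ((0:ℝ):ℂ)) :=
        (Complex.continuous_ofReal.tendsto _).comp hsn
      simpa using this.mul_const ζ
    have hcw : ContinuousWithinAt h (Metric.closedBall (0:ℂ) 1) 0 :=
      hcont 0 (Metric.mem_closedBall_self (by norm_num))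
    have := hcw.tendsto.comp (tendsto_nhdsWithin_iff.2 ⟨htend, Filter.Eventually.of_forall hmem⟩)
    simpa [h0, Function.comp_def] using this
  have hcζ : Filter.Tendsto (fun n : ℕ => h ((rn n : ℂ) * ζ)) Filter.atTop (nhds (h ζ)) := by
    have hmem : ∀ n, ((rn n : ℂ) * ζ) ∈ Metric.closedBall (0:ℂ) 1 := by
      intro n
      rw [Metric.mem_closedBall, dist_zero_right, norm_mul, Complex.norm_real,
        Real.norm_eq_abs, abs_of_pos (lt_of_lt_of_le hρ0 (hrnρ n))]
      calc rn n * ‖ζ‖ ≤ 1 * 1 := by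
            apply mul_le_mul (hrn1 n).le hζ1 (norm_nonneg _) (by norm_num)
        _ = 1 := one_mul _
    have htend : Filter.Tendsto (fun n : ℕ => (rn n : ℂ) * ζ) Filter.atTop (nhds ζ) := by
      have : Filter.Tendsto (fun n : ℕ => ((rn n : ℝ) : ℂ)) Filter.atTop (nhds ((1:ℝ):ℂ)) :=
        (Complex.continuous_ofReal.tendsto _).comp hrn
      simpa using this.mul_const ζ
    have hcw : ContinuousWithinAt h (Metric.closedBall (0:ℂ) 1) ζ := hcont ζ hζ
    exact hcw.tendsto.comp (tendsto_nhdsWithin_iff.2 ⟨htend, Filter.Eventually.of_forall hmem⟩)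
  have hlim : Filter.Tendsto
      (fun n : ℕ => ‖h ((rn n : ℂ) * ζ) - h ((sn n : ℂ) * ζ)‖) Filter.atTop (nhds ‖h ζ - 0‖) :=
    (hcζ.sub hc0).norm
  have hfinal : ‖h ζ - 0‖ ≤ C * ρ ^ (N - N₁) + C * (1 - ρ) := by
    apply le_of_tendsto hlim
    filter_upwards with n
    exact est (sn n) (rn n) (hsnpos n) (hsnρ n) (hrnρ n) (hrn1 n)
  rw [sub_zero] at hfinal
  have hρε : C * (1 - ρ) ≤ ε / 3 := by
    have h1ρ : 1 - ρ ≤ δ := by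
      have := le_max_left (1 - δ) (1/2)
      simp only [hρdef] at *
      linarith [le_max_left (1 - δ) (1/2 : ℝ)]
    calc C * (1 - ρ) ≤ C * δ := by
          apply mul_le_mul_of_nonneg_left h1ρ hC0
      _ ≤ ε / 3 := hCδ
  have hρM : C * ρ ^ (N - N₁) ≤ ε / 3 := by
    have := hN₀' (N - N₁) hM
    calc C * ρ ^ (N - N₁) ≤ C * δ := by
          apply mul_le_mul_of_nonneg_left this.le hC0
      _ ≤ ε / 3 := hCδ
  calc ‖h ζ‖ ≤ C * ρ ^ (N - N₁) + C * (1 - ρ) := hfinal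
    _ ≤ ε / 3 + ε / 3 := add_le_add hρM hρε
    _ < ε := by linarith
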